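/- An n,k-history t is structured if and only if S_n(F(t)) = t. -/

import Mathlib

/-- A list over `A × Fin k` is *basic* (for parameter `n`) if it has length at most `n`
and all its pebble indices (second components) are distinct. -/
def basic {A : Type} {k : ℕ} (n : ℕ) (l : List (A × Fin k)) : Prop :=
  l.length ≤ n ∧ (l.map Prod.snd).Nodup

instance {A : Type} {k : ℕ} (n : ℕ) (l : List (A × Fin k)) : Decidable (basic n l) := by
  unfold basic; infer_instance

/-- The length of the largest basic prefix of `s`. -/
def lbp {A : Type} {k : ℕ} (n : ℕ) (s : List (A × Fin k)) : ℕ :=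
  ((List.range (s.length + 1)).filter (fun m => decide (basic n (s.take m)))).foldr max 0

/-- The `n`-structure function `S_n`: decompose a `k`-history into its largest basic
prefix followed by the structuring of the rest. -/
def Sn {A : Type} {k : ℕ} (n : ℕ) (s : List (A × Fin k)) : List (List (A × Fin k)) :=
  if h : s.length = 0 then []
  else if basic n s then [s]
  else s.take (max 1 (lbp n s)) :: Sn n (s.drop (max 1 (lbp n s)))
termination_by s.length
decreasing_by
  have h1 : 0 < s.length := Nat.pos_of_ne_zero h
  have h2 : 0 < max 1 (lbp n s) := lt_of_lt_of_le one_pos (le_max_left _ _)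
  simp only [List.length_drop]
  omega

/-- An `n,k`-history (a list of blocks) is *structured* if for each pair of successive
blocks `s, s'`, either `s` has length exactly `n` or `s'` begins with a pair whose
pebble index occurs in `s`. -/
def structured {A : Type} {k : ℕ} (n : ℕ) (t : List (List (A × Fin k))) : Prop :=
  t.Chain' (fun s s' => s.length = n ∨ ∃ a p, s'.head? = some (a, p) ∧ p ∈ s.map Prod.snd)

/-- an `n,k`-history `t` (a list of nonempty basic blocks) is
structured if and only if `S_n (F t) = t`. -/
lemma basic_of_prefix {A : Type} {k n : ℕ} {l l' : List (A × Fin k)}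
    (h : l <+: l') (hb : basic n l') : basic n l :=
  ⟨h.length_le.trans hb.1, ((h.sublist).map Prod.snd).nodup hb.2⟩

lemma foldr_max_le {L : List ℕ} {B : ℕ} (h : ∀ x ∈ L, x ≤ B) : L.foldr max 0 ≤ B := by
  induction L with
  | nil => exact Nat.zero_le B
  | cons a L ih =>
    simp only [List.foldr_cons, max_le_iff]
    exact ⟨h a (List.mem_cons_self), ih fun x hx => h x (List.mem_cons_of_mem _ hx)⟩

lemma le_foldr_max {L : List ℕ} {B : ℕ} (h : B ∈ L) : B ≤ L.foldr max 0 := by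
  induction L with
  | nil => simp at h
  | cons a L ih =>
    simp only [List.foldr_cons]
    rcases List.mem_cons.mp h with rfl | h
    · exact le_max_left _ _
    · exact le_trans (ih h) (le_max_right _ _)

lemma lbp_eq {A : Type} {k n : ℕ} {b r : List (A × Fin k)} (hb : basic n b)
    (hr : r ≠ [] → ¬ basic n (b ++ r.take 1)) : lbp n (b ++ r) = b.length := by
  apply le_antisymm
  · apply foldr_max_le
    intro m hm
    simp only [List.mem_filter, List.mem_range, decide_eq_true_eq] at hm
    by_contra hlt
    push_neg at hlt
    have hrne : r ≠ [] := by
      rintro rfl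
      simp at hm
      omega
    apply hr hrne
    have h1 : (b ++ r).take (b.length + 1) = b ++ r.take 1 := by simp [List.take_append]
    rw [← h1]
    exact basic_of_prefix (List.take_prefix_take_left hlt) hm.2
  · apply le_foldr_max
    simp only [List.mem_filter, List.mem_range, decide_eq_true_eq]
    constructor
    · simp
    · rw [List.take_left]
      exact hb

lemma Sn_eq_cons {A : Type} {k n : ℕ} {b r : List (A × Fin k)} (hb : b ≠ [])
    (hbb : basic n b) (hr : r ≠ [] → ¬ basic n (b ++ r.take 1)) :
    Sn n (b ++ r) = b :: Sn n r := by
  rcases eq_or_ne r [] with rfl | hrne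
  · rw [List.append_nil, Sn]
    have : b.length ≠ 0 := fun h => hb (List.length_eq_zero_iff.mp h)
    rw [dif_neg this, if_pos hbb, Sn]
    simp
  · have hM : max 1 (lbp n (b ++ r)) = b.length := by
      rw [lbp_eq hbb hr]
      have : 1 ≤ b.length := List.length_pos_iff.mpr hb
      omega
    have hnb : ¬ basic n (b ++ r) := by
      intro h
      exact hr hrne (basic_of_prefix ⟨r.drop 1, by rw [List.append_assoc, List.take_append_drop]⟩ h)
    rw [Sn]
    have hlen : (b ++ r).length ≠ 0 := by
      simp only [List.length_append]
      have : 1 ≤ b.length := List.length_pos_iff.mpr hb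
      omega
    rw [dif_neg hlen, if_neg hnb, hM, List.take_left, List.drop_left]

theorem stmt_1 {A : Type} {n k : ℕ} (hn : 1 ≤ n) (hnk : n ≤ k)
    (t : List (List (A × Fin k)))
    (hne : ∀ l ∈ t, l ≠ []) (hbasic : ∀ l ∈ t, basic n l) :
    structured n t ↔ Sn n t.flatten = t := by
  induction t with
  | nil =>
    rw [Sn]
    simp [structured, List.Chain']
  | cons b rest ih =>
    have hbne : b ≠ [] := hne b (List.mem_cons_self)
    have hbb : basic n b := hbasic b (List.mem_cons_self)
    have ih' := ih (fun l hl => hne l (List.mem_cons_of_mem _ hl))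
      (fun l hl => hbasic l (List.mem_cons_of_mem _ hl))
    rcases rest with _ | ⟨s', rs⟩
    · simp only [List.flatten_cons, List.flatten_nil, List.append_nil]
      constructor
      · intro _
        rw [Sn, dif_neg (fun h => hbne (List.length_eq_zero_iff.mp h)), if_pos hbb]
      · intro _
        exact List.isChain_singleton _
    · have hs'ne : s' ≠ [] := hne s' (by simp)
      obtain ⟨⟨a, p⟩, s'', rfl⟩ := List.exists_cons_of_ne_nil hs'ne
      set r : List (A × Fin k) := ((a, p) :: s'') ++ rs.flatten with hrdef
      have hflat : (b :: ((a, p) :: s'') :: rs).flatten = b ++ r := by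
        simp [hrdef]
      have hrne : r ≠ [] := by simp [hrdef]
      have hrtake : r.take 1 = [(a, p)] := rfl
      have hcond : (b.length = n ∨ p ∈ b.map Prod.snd) ↔ ¬ basic n (b ++ [(a, p)]) := by
        constructor
        · rintro (hl | hp) ⟨h1, h2⟩
          · simp at h1; omega
          · rw [List.map_append, List.nodup_append] at h2
            exact h2.2.2 p hp p (by simp) rfl
        · intro hnb
          by_contra hc
          push_neg at hc
          apply hnb
          refine ⟨?_, ?_⟩
          · simp only [List.length_append, List.length_cons, List.length_nil]
            have := hbb.1
            omega
          · rw [List.map_append, List.nodup_append]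
            refine ⟨hbb.2, by simp, ?_⟩
            intro q hq q' hqm heq
            simp only [List.map_cons, List.map_nil, List.mem_singleton] at hqm
            subst hqm heq
            exact hc.2 hq
      constructor
      · intro hstruct
        simp only [structured, List.Chain', List.isChain_cons_cons] at hstruct
        obtain ⟨hc1, hc2⟩ := hstruct
        have hp : b.length = n ∨ p ∈ b.map Prod.snd := by
          rcases hc1 with hl | ⟨a', p', hh, hp'⟩
          · exact Or.inl hl
          · simp only [List.head?_cons, Option.some.injEq, Prod.mk.injEq] at hh
            exact Or.inr (hh.2 ▸ hp')
        rw [hflat, Sn_eq_cons hbne hbb (fun _ => hrtake ▸ hcond.mp hp)]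
        congr 1
        exact ih'.mp hc2
      · intro h
        rw [hflat] at h
        have hnb : ¬ basic n (b ++ [(a, p)]) := by
          intro hbad
          have hlen : (b ++ r).length ≠ 0 := by
            simp only [List.length_append]
            have : 1 ≤ b.length := List.length_pos_iff.mpr hbne
            omega
          by_cases hc : basic n (b ++ r)
          · rw [Sn, dif_neg hlen, if_pos hc] at h
            have := List.cons.injEq .. ▸ h
            simp only [List.cons.injEq] at h
            exact (List.cons_ne_nil _ _) h.2.symm
          · rw [Sn, dif_neg hlen, if_neg hc] at h
            simp only [List.cons.injEq] at h
            have hlbp : b.length + 1 ≤ lbp n (b ++ r) := by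
              apply le_foldr_max
              simp only [List.mem_filter, List.mem_range, decide_eq_true_eq]
              constructor
              · simp only [List.length_append]
                have : 1 ≤ r.length := List.length_pos_iff.mpr hrne
                omega
              · rw [show (b ++ r).take (b.length + 1) = b ++ r.take 1 from by simp [List.take_append],
                  hrtake]
                exact hbad
            have hlen1 : ((b ++ r).take (max 1 (lbp n (b ++ r)))).length = b.length := by
              rw [h.1]
            rw [List.length_take] at hlen1
            simp only [List.length_append] at hlen1
            have : 1 ≤ r.length := List.length_pos_iff.mpr hrne
            omega
        rw [Sn_eq_cons hbne hbb (fun _ => hrtake ▸ hnb)] at h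
        simp only [List.cons.injEq] at h
        simp only [structured, List.Chain', List.isChain_cons_cons]
        refine ⟨?_, ih'.mpr h.2⟩
        rcases hcond.mpr hnb with hl | hp
        · exact Or.inl hl
        · exact Or.inr ⟨a, p, rfl, hp⟩
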